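/- Let n ≥ 3 and let d1, …, dn be unit vectors in ℂ². Then Σ_{i=1}^{n−1} |⟨d_i, d_{i+1}⟩|² − |⟨d_1, d_n⟩|² ≤ n cos²(π/(2n)) − 1. -/

import Mathlib

open scoped InnerProductSpace
open Real Finset

lemma jensen_cos {s : Finset ℕ} (hs : s.Nonempty) {y : ℕ → ℝ}
    (h0 : ∀ i ∈ s, 0 ≤ y i) (h1 : ∀ i ∈ s, y i ≤ π / 2) :
    ∑ i ∈ s, Real.cos (y i) ≤ s.card * Real.cos ((∑ i ∈ s, y i) / s.card) := by
  have hcard : (0:ℝ) < s.card := by exact_mod_cast hs.card_pos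
  have hcc : ConcaveOn ℝ (Set.Icc (-(π/2)) (π/2)) Real.cos := strictConcaveOn_cos_Icc.concaveOn
  have key := hcc.le_map_sum (t := s) (w := fun _ => (s.card : ℝ)⁻¹) (p := y)
    (fun i _ => by positivity)
    (by simp [Finset.sum_const, nsmul_eq_mul]
        field_simp)
    (fun i hi => ⟨by linarith [h0 i hi, pi_div_two_pos.le], h1 i hi⟩)
  have e1 : ∑ i ∈ s, ((s.card : ℝ))⁻¹ • y i = (∑ i ∈ s, y i) / s.card := by
    rw [← Finset.smul_sum]; simp [smul_eq_mul, div_eq_inv_mul]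
  have e2 : ∑ i ∈ s, ((s.card : ℝ))⁻¹ • Real.cos (y i)
      = (∑ i ∈ s, Real.cos (y i)) / s.card := by
    rw [← Finset.smul_sum]; simp [smul_eq_mul, div_eq_inv_mul]
  rw [e1, e2] at key
  calc ∑ i ∈ s, Real.cos (y i)
      = (∑ i ∈ s, Real.cos (y i)) / s.card * s.card := by field_simp
    _ ≤ Real.cos ((∑ i ∈ s, y i) / s.card) * s.card := by
        apply mul_le_mul_of_nonneg_right key hcard.le
    _ = s.card * Real.cos ((∑ i ∈ s, y i) / s.card) := by ring

lemma mono_aux {q : ℝ} (hq : 1 ≤ q) {t : ℝ} (ht0 : 0 ≤ t) (ht : t ≤ π/2) :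
    q * Real.cos (t/q) - Real.cos t ≤ q * Real.cos (π/(2*q)) := by
  have hqpos : 0 < q := lt_of_lt_of_le one_pos hq
  set F : ℝ → ℝ := fun x => q * Real.cos (x/q) - Real.cos x with hF
  have hder : ∀ x, HasDerivAt F (Real.sin x - Real.sin (x/q)) x := by
    intro x
    have h1 : HasDerivAt (fun y : ℝ => y / q) (1/q) x := by
      simpa using (hasDerivAt_id x).div_const q
    have h2 : HasDerivAt (fun y : ℝ => Real.cos (y/q)) (-Real.sin (x/q) * (1/q)) x :=
      h1.cos
    have h3 := (h2.const_mul q).sub (Real.hasDerivAt_cos x)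
    refine h3.congr_deriv ?_
    field_simp
    ring
  have hmono : MonotoneOn F (Set.Icc 0 (π/2)) := by
    apply monotoneOn_of_deriv_nonneg (convex_Icc 0 (π/2))
    · exact Continuous.continuousOn (by
        have : Continuous F := by
          simp only [hF]
          fun_prop
        exact this)
    · intro x hx
      exact (hder x).differentiableAt.differentiableWithinAt
    · intro x hx
      rw [(hder x).deriv]
      rw [interior_Icc] at hx
      have hx0 : 0 < x := hx.1
      have hx2 : x < π/2 := hx.2
      have h4 : x / q ≤ x := div_le_self hx0.le hq
      have hxq0 : (0:ℝ) ≤ x/q := by positivity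
      have hxq : -(π/2) ≤ x/q := by linarith [pi_div_two_pos]
      have := Real.sin_le_sin_of_le_of_le_pi_div_two hxq hx2.le h4
      linarith
  have h5 : F t ≤ F (π/2) := by
    apply hmono ⟨ht0, ht⟩ ⟨pi_div_two_pos.le, le_refl _⟩ ht
  have h6 : F (π/2) = q * Real.cos (π/(2*q)) := by
    simp only [hF, Real.cos_pi_div_two]
    rw [div_div]
    ring_nf
  linarith [h5, h6.symm.le, h6.le]

lemma key2 {q : ℕ} (hq : 2 ≤ q) :
    (q:ℝ) * Real.cos (π/(2*q)) ≤ ((q:ℝ)+1) * Real.cos (π/((q:ℝ)+1)) := by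
  by_cases h2 : q = 2
  · subst h2
    norm_num [Real.cos_pi_div_four, Real.cos_pi_div_three]
    nlinarith [Real.sq_sqrt (by norm_num : (0:ℝ) ≤ 2), Real.sqrt_nonneg 2]
  by_cases h3 : q = 3
  · subst h3
    have e1 : π / (2*((3:ℕ):ℝ)) = π/6 := by norm_num
    have e2 : π / (((3:ℕ):ℝ)+1) = π/4 := by norm_num
    rw [e1, e2, Real.cos_pi_div_six, Real.cos_pi_div_four]
    have s9 : Real.sqrt 9 = 3 := by
      rw [show (9:ℝ)=3^2 by norm_num, Real.sqrt_sq (by norm_num : (0:ℝ) ≤ 3)]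
    have s16 : Real.sqrt 16 = 4 := by
      rw [show (16:ℝ)=4^2 by norm_num, Real.sqrt_sq (by norm_num : (0:ℝ) ≤ 4)]
    have a27 : Real.sqrt 27 = 3 * Real.sqrt 3 := by
      rw [show (27:ℝ) = 9*3 by norm_num, Real.sqrt_mul (by norm_num : (0:ℝ) ≤ 9), s9]
    have a32 : Real.sqrt 32 = 4 * Real.sqrt 2 := by
      rw [show (32:ℝ) = 16*2 by norm_num, Real.sqrt_mul (by norm_num : (0:ℝ) ≤ 16), s16]
    have hle : Real.sqrt 27 ≤ Real.sqrt 32 := Real.sqrt_le_sqrt (by norm_num)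
    rw [a27, a32] at hle
    push_cast
    nlinarith [hle]
  have h4 : 4 ≤ q := by omega
  have hQ : (4:ℝ) ≤ (q:ℝ) := by exact_mod_cast h4
  have hQpos : (0:ℝ) < q := by linarith
  have hub : Real.cos (π/(2*(q:ℝ))) ≤ 1 - 2/π^2 * (π/(2*(q:ℝ)))^2 := by
    apply Real.cos_le_one_sub_mul_cos_sq
    rw [abs_of_nonneg (by positivity)]
    calc π/(2*(q:ℝ)) ≤ π/2 := by
          apply div_le_div_of_nonneg_left pi_pos.le (by norm_num) (by linarith)
      _ ≤ π := by linarith [pi_pos]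
  have hlb : 1 - (π/((q:ℝ)+1))^2/2 ≤ Real.cos (π/((q:ℝ)+1)) := Real.one_sub_sq_div_two_le_cos
  have hpi2 : π^2 < 10 := by nlinarith [pi_lt_d2, pi_gt_three]
  have hcalc : 2/π^2 * (π/(2*(q:ℝ)))^2 = 1/(2*(q:ℝ)^2) := by
    field_simp
  rw [hcalc] at hub
  have hkey : (q:ℝ) * (1 - 1/(2*(q:ℝ)^2)) ≤ ((q:ℝ)+1) * (1 - (π/((q:ℝ)+1))^2/2) := by
    have e : ((q:ℝ)+1) * (1 - (π/((q:ℝ)+1))^2/2) = (q:ℝ)+1 - π^2/(2*((q:ℝ)+1)) := by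
      field_simp
    rw [e]
    have e2 : (q:ℝ) * (1 - 1/(2*(q:ℝ)^2)) = (q:ℝ) - 1/(2*(q:ℝ)) := by
      field_simp
    rw [e2]
    have : π^2/(2*((q:ℝ)+1)) ≤ 1 := by
      rw [div_le_one (by linarith)]
      linarith
    have h0 : 0 < 1/(2*(q:ℝ)) := by positivity
    linarith
  calc (q:ℝ) * Real.cos (π/(2*(q:ℝ)))
      ≤ (q:ℝ) * (1 - 1/(2*(q:ℝ)^2)) := by
        apply mul_le_mul_of_nonneg_left hub hQpos.le
    _ ≤ ((q:ℝ)+1) * (1 - (π/((q:ℝ)+1))^2/2) := hkey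
    _ ≤ ((q:ℝ)+1) * Real.cos (π/((q:ℝ)+1)) := by
        apply mul_le_mul_of_nonneg_left hlb (by linarith)

lemma sum_cos_le {t : Finset ℕ} {x : ℕ → ℝ} (hn : 3 ≤ t.card)
    (h0 : ∀ i ∈ t, 0 ≤ x i) (h1 : ∀ i ∈ t, x i ≤ π) (hs : π ≤ ∑ i ∈ t, x i) :
    ∑ i ∈ t, Real.cos (x i) ≤ t.card * Real.cos (π / t.card) := by
  have htne : t.Nonempty := Finset.card_pos.mp (by omega)
  have hNpos : (0:ℝ) < t.card := by exact_mod_cast htne.card_pos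
  have hN3 : (3:ℝ) ≤ t.card := by exact_mod_cast hn
  -- generic finishing step from Jensen when all values are in [0, π/2] and sum ≥ π
  have finish : ∀ y : ℕ → ℝ, (∀ i ∈ t, 0 ≤ y i) → (∀ i ∈ t, y i ≤ π/2) →
      π ≤ ∑ i ∈ t, y i → ∑ i ∈ t, Real.cos (y i) ≤ t.card * Real.cos (π / t.card) := by
    intro y hy0 hy1 hysum
    have hj := jensen_cos htne hy0 hy1
    have hmean1 : π / t.card ≤ (∑ i ∈ t, y i) / t.card := by gcongr
    have hsumle : ∑ i ∈ t, y i ≤ t.card * (π/2) := by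
      calc ∑ i ∈ t, y i ≤ ∑ _i ∈ t, (π/2) := Finset.sum_le_sum hy1
        _ = t.card * (π/2) := by rw [Finset.sum_const, nsmul_eq_mul]
    have hmean2 : (∑ i ∈ t, y i) / t.card ≤ π/2 := by
      rw [div_le_iff₀ hNpos]
      calc ∑ i ∈ t, y i ≤ t.card * (π/2) := hsumle
        _ = π/2 * t.card := by ring
    have hcos : Real.cos ((∑ i ∈ t, y i) / t.card) ≤ Real.cos (π / t.card) := by
      apply Real.cos_le_cos_of_nonneg_of_le_pi (by positivity)
        (by linarith [pi_pos]) hmean1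
    calc ∑ i ∈ t, Real.cos (y i) ≤ t.card * Real.cos ((∑ i ∈ t, y i) / t.card) := hj
      _ ≤ t.card * Real.cos (π / t.card) := by
          apply mul_le_mul_of_nonneg_left hcos hNpos.le
  set T := t.filter (fun i => π/2 < x i) with hT
  rcases Nat.lt_or_ge T.card 2 with hTc | hTc
  · rcases Nat.lt_or_ge T.card 1 with hTc0 | hTc1
    · -- no large angle
      have hTe : T = ∅ := Finset.card_eq_zero.mp (by omega)
      apply finish x h0 _ hs
      intro i hi
      by_contra hgt
      push_neg at hgt
      have : i ∈ T := Finset.mem_filter.mpr ⟨hi, hgt⟩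
      simp [hTe] at this
    · -- exactly one large angle j
      have hTc1' : T.card = 1 := by omega
      obtain ⟨j, hj⟩ := Finset.card_eq_one.mp hTc1'
      have hjT : j ∈ T := by simp [hj]
      have hjt : j ∈ t := (Finset.mem_filter.mp hjT).1
      have hjbig : π/2 < x j := (Finset.mem_filter.mp hjT).2
      set S := t.erase j with hS
      have hSsmall : ∀ i ∈ S, x i ≤ π/2 := by
        intro i hi
        by_contra hgt
        push_neg at hgt
        have hiT : i ∈ T := Finset.mem_filter.mpr ⟨Finset.mem_of_mem_erase hi, hgt⟩
        rw [hj] at hiT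
        have := Finset.mem_singleton.mp hiT
        exact (Finset.ne_of_mem_erase hi) this
      have hS0 : ∀ i ∈ S, 0 ≤ x i := fun i hi => h0 i (Finset.mem_of_mem_erase hi)
      have hScard : S.card = t.card - 1 := Finset.card_erase_of_mem hjt
      have hScard2 : 2 ≤ S.card := by omega
      have hSne : S.Nonempty := Finset.card_pos.mp (by omega)
      have hQpos : (0:ℝ) < S.card := by exact_mod_cast hSne.card_pos
      have hsplit : ∑ i ∈ t, x i = x j + ∑ i ∈ S, x i := (Finset.add_sum_erase t x hjt).symm
      have hsig0 : 0 ≤ ∑ i ∈ S, x i := Finset.sum_nonneg hS0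
      -- Jensen on S
      have hjen := jensen_cos hSne hS0 hSsmall
      set σ := ∑ i ∈ S, x i with hσ
      set tt := π - x j with htt
      have htt0 : 0 ≤ tt := by simp [htt]; linarith [h1 j hjt]
      have htt2 : tt ≤ π/2 := by simp [htt]; linarith
      have httσ : tt ≤ σ := by
        have := hs
        rw [hsplit] at this
        simp [htt]; linarith
      have hσle : σ ≤ S.card * (π/2) := by
        calc σ ≤ ∑ _i ∈ S, (π/2) := Finset.sum_le_sum hSsmall
          _ = S.card * (π/2) := by rw [Finset.sum_const, nsmul_eq_mul]
      have hmean2 : σ / S.card ≤ π/2 := by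
        rw [div_le_iff₀ hQpos]; linarith
      have hcos1 : Real.cos (σ / S.card) ≤ Real.cos (tt / S.card) := by
        apply Real.cos_le_cos_of_nonneg_of_le_pi (by positivity)
          (by linarith [pi_pos]) (by gcongr)
      -- assemble
      have hstep1 : ∑ i ∈ t, Real.cos (x i) = Real.cos (x j) + ∑ i ∈ S, Real.cos (x i) :=
        (Finset.add_sum_erase t (fun i => Real.cos (x i)) hjt).symm
      have hcosj : Real.cos (x j) = - Real.cos tt := by
        rw [show x j = π - tt by simp [htt], Real.cos_pi_sub]
      have hq1 : (1:ℝ) ≤ S.card := by exact_mod_cast hSne.card_pos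
      have hmono := mono_aux hq1 htt0 htt2
      have hkey2 := key2 (q := S.card) hScard2
      have hcast : ((S.card:ℝ)) + 1 = t.card := by
        rw [hScard]
        have : (1:ℕ) ≤ t.card := by omega
        push_cast [Nat.cast_sub this]
        ring
      rw [hcast] at hkey2
      calc ∑ i ∈ t, Real.cos (x i)
          = Real.cos (x j) + ∑ i ∈ S, Real.cos (x i) := hstep1
        _ ≤ - Real.cos tt + S.card * Real.cos (σ / S.card) := by
            rw [hcosj]; linarith [hjen]
        _ ≤ - Real.cos tt + S.card * Real.cos (tt / S.card) := by
            have := mul_le_mul_of_nonneg_left hcos1 hQpos.le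
            linarith
        _ ≤ (S.card : ℝ) * Real.cos (π/(2*S.card)) := by linarith [hmono]
        _ ≤ t.card * Real.cos (π / t.card) := hkey2
  · -- at least two large angles: clamp at π/2
    set y := fun i => min (x i) (π/2) with hy
    have hy0 : ∀ i ∈ t, 0 ≤ y i := fun i hi => le_min (h0 i hi) pi_div_two_pos.le
    have hy1 : ∀ i ∈ t, y i ≤ π/2 := fun i _ => min_le_right _ _
    have hcosle : ∀ i ∈ t, Real.cos (x i) ≤ Real.cos (y i) := by
      intro i hi
      apply Real.cos_le_cos_of_nonneg_of_le_pi (hy0 i hi) (h1 i hi) (min_le_left _ _)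
    have hysum : π ≤ ∑ i ∈ t, y i := by
      have hTsub : T ⊆ t := Finset.filter_subset _ _
      have hTy : ∀ i ∈ T, y i = π/2 := by
        intro i hi
        have := (Finset.mem_filter.mp hi).2
        simp [hy, min_eq_right this.le]
      have h2 : ∑ i ∈ T, y i = T.card * (π/2) := by
        rw [Finset.sum_congr rfl hTy, Finset.sum_const, nsmul_eq_mul]
      have h3 : ∑ i ∈ T, y i ≤ ∑ i ∈ t, y i :=
        Finset.sum_le_sum_of_subset_of_nonneg hTsub (fun i hi _ => hy0 i hi)
      have hTc2 : (2:ℝ) ≤ T.card := by exact_mod_cast hTc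
      have : π ≤ (T.card:ℝ) * (π/2) := by nlinarith [pi_pos]
      linarith [h2 ▸ h3]
    calc ∑ i ∈ t, Real.cos (x i) ≤ ∑ i ∈ t, Real.cos (y i) := Finset.sum_le_sum hcosle
      _ ≤ t.card * Real.cos (π / t.card) := finish y hy0 hy1 hysum

open InnerProductGeometry in
lemma angle_triangle_unit {V : Type*} [NormedAddCommGroup V] [InnerProductSpace ℝ V]
    {u v w : V} (hu : ‖u‖ = 1) (hv : ‖v‖ = 1) (hw : ‖w‖ = 1) :
    angle u w ≤ angle u v + angle v w := by
  by_cases hab : angle u v + angle v w ≤ π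
  case neg =>
    push_neg at hab
    linarith [angle_le_pi u w]
  case pos =>
    set a := ⟪u, v⟫_ℝ with ha
    set b := ⟪v, w⟫_ℝ with hb
    have hcosa : Real.cos (angle u v) = a := by
      rw [cos_angle, hu, hv]; simp [ha]
    have hcosb : Real.cos (angle v w) = b := by
      rw [cos_angle, hv, hw]; simp [hb]
    have hcosuw : Real.cos (angle u w) = ⟪u, w⟫_ℝ := by
      rw [cos_angle, hu, hw]; simp
    set p := u - a • v with hp
    set q := w - b • v with hq
    have hvv : ⟪v, v⟫_ℝ = 1 := by
      rw [real_inner_self_eq_norm_sq, hv]; norm_num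
    have hvu : ⟪v, u⟫_ℝ = a := by rw [ha]; exact real_inner_comm u v
    have hwv : ⟪w, v⟫_ℝ = b := by rw [hb]; exact real_inner_comm v w
    have hvw : ⟪v, w⟫_ℝ = b := hb.symm
    have hpq : ⟪p, q⟫_ℝ = ⟪u, w⟫_ℝ - a * b := by
      simp only [hp, hq, inner_sub_left, inner_sub_right, real_inner_smul_left,
        real_inner_smul_right, hvv, hvu, hwv, hvw]
      ring
    have hpp : ‖p‖^2 = 1 - a^2 := by
      rw [← real_inner_self_eq_norm_sq]
      simp only [hp, inner_sub_left, inner_sub_right, real_inner_smul_left,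
        real_inner_smul_right, hvv, hvu, hwv, hvw]
      rw [real_inner_self_eq_norm_sq, hu]
      ring
    have hqq : ‖q‖^2 = 1 - b^2 := by
      rw [← real_inner_self_eq_norm_sq]
      simp only [hq, inner_sub_left, inner_sub_right, real_inner_smul_left,
        real_inner_smul_right, hvv, hvu, hwv, hvw]
      rw [real_inner_self_eq_norm_sq, hw]
      ring
    have hnp : ‖p‖ = Real.sqrt (1 - a^2) := by
      rw [← hpp, Real.sqrt_sq (norm_nonneg p)]
    have hnq : ‖q‖ = Real.sqrt (1 - b^2) := by
      rw [← hqq, Real.sqrt_sq (norm_nonneg q)]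
    have hsina : Real.sin (angle u v) = Real.sqrt (1 - a^2) := by
      rw [Real.sin_eq_sqrt_one_sub_cos_sq (angle_nonneg u v) (angle_le_pi u v), hcosa]
    have hsinb : Real.sin (angle v w) = Real.sqrt (1 - b^2) := by
      rw [Real.sin_eq_sqrt_one_sub_cos_sq (angle_nonneg v w) (angle_le_pi v w), hcosb]
    have hCS : -(‖p‖ * ‖q‖) ≤ ⟪p, q⟫_ℝ := by
      have := abs_real_inner_le_norm p q
      rw [abs_le] at this
      exact this.1
    have hkey : Real.cos (angle u v + angle v w) ≤ Real.cos (angle u w) := by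
      rw [Real.cos_add, hcosa, hcosb, hsina, hsinb, hcosuw, ← hnp, ← hnq]
      linarith [hpq ▸ hCS]
    by_contra hlt
    push_neg at hlt
    have := Real.strictAntiOn_cos
      ⟨add_nonneg (angle_nonneg u v) (angle_nonneg v w), hab⟩
      ⟨angle_nonneg u w, angle_le_pi u w⟩ hlt
    linarith

noncomputable def blochMap (u : EuclideanSpace ℂ (Fin 2)) : EuclideanSpace ℝ (Fin 3) :=
  (WithLp.equiv 2 (Fin 3 → ℝ)).symm
    ![2 * ((starRingEnd ℂ) (u 0) * u 1).re,
      2 * ((starRingEnd ℂ) (u 0) * u 1).im,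
      ((u 0).re^2 + (u 0).im^2) - ((u 1).re^2 + (u 1).im^2)]

lemma comp_sq (u : EuclideanSpace ℂ (Fin 2)) (hu : ‖u‖ = 1) :
    ((u 0).re^2 + (u 0).im^2) + ((u 1).re^2 + (u 1).im^2) = 1 := by
  have h := EuclideanSpace.norm_eq u
  rw [hu] at h
  have h2 : (∑ i : Fin 2, ‖u i‖^2) = 1 := by
    have hnn : (0:ℝ) ≤ ∑ i : Fin 2, ‖u i‖^2 := by positivity
    nlinarith [Real.sq_sqrt hnn, h.symm]
  rw [Fin.sum_univ_two] at h2
  simp only [Complex.sq_norm, Complex.normSq_apply] at h2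
  linear_combination h2

lemma bloch_inner (u v : EuclideanSpace ℂ (Fin 2)) :
    ⟪blochMap u, blochMap v⟫_ℝ =
      2 * ‖⟪u, v⟫_ℂ‖^2 - (((u 0).re^2 + (u 0).im^2) + ((u 1).re^2 + (u 1).im^2))
        * (((v 0).re^2 + (v 0).im^2) + ((v 1).re^2 + (v 1).im^2)) := by
  simp only [blochMap, PiLp.inner_apply, RCLike.inner_apply, conj_trivial,
    WithLp.equiv_symm_apply, PiLp.toLp_apply, Fin.sum_univ_three, Fin.sum_univ_two, Matrix.cons_val_zero,
    Matrix.cons_val_one, Matrix.head_cons, Matrix.cons_val_two, Matrix.tail_cons]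
  simp only [Complex.sq_norm, Complex.normSq_apply, Complex.add_re,
    Complex.add_im, Complex.mul_re, Complex.mul_im, Complex.conj_re, Complex.conj_im]
  ring

lemma bloch_norm (u : EuclideanSpace ℂ (Fin 2)) (hu : ‖u‖ = 1) : ‖blochMap u‖ = 1 := by
  have h : ⟪blochMap u, blochMap u⟫_ℝ = 1 := by
    have := bloch_inner u u
    rw [comp_sq u hu] at this
    rw [this]
    have hinner : ⟪u, u⟫_ℂ = (starRingEnd ℂ) (u 0) * u 0 + (starRingEnd ℂ) (u 1) * u 1 := by
      simp only [PiLp.inner_apply, RCLike.inner_apply, Fin.sum_univ_two]; ring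
    have hc := comp_sq u hu
    rw [hinner]
    simp only [Complex.sq_norm, Complex.normSq_apply, Complex.add_re,
      Complex.add_im, Complex.mul_re, Complex.mul_im, Complex.conj_re, Complex.conj_im]
    nlinarith [hc]
  have h2 : ‖blochMap u‖^2 = 1 := by rw [← real_inner_self_eq_norm_sq]; exact h
  nlinarith [norm_nonneg (blochMap u)]

lemma bloch_key (u v : EuclideanSpace ℂ (Fin 2)) (hu : ‖u‖ = 1) (hv : ‖v‖ = 1) :
    ‖⟪u, v⟫_ℂ‖^2 = (1 + ⟪blochMap u, blochMap v⟫_ℝ) / 2 := by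
  have := bloch_inner u v
  rw [comp_sq u hu, comp_sq v hv] at this
  rw [this]; ring

theorem qubit_cycle_bound
    (n : ℕ) (hn : 3 ≤ n) (d : ℕ → EuclideanSpace ℂ (Fin 2))
    (hd : ∀ i, 1 ≤ i → i ≤ n → ‖d i‖ = 1) :
    (∑ i ∈ Finset.Icc 1 (n - 1), ‖⟪d i, d (i + 1)⟫_ℂ‖ ^ 2) - ‖⟪d 1, d n⟫_ℂ‖ ^ 2 ≤
      n * cos (π / (2 * n)) ^ 2 - 1 := by
  set v : ℕ → EuclideanSpace ℝ (Fin 3) := fun i => blochMap (d i) with hv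
  have hvnorm : ∀ i, 1 ≤ i → i ≤ n → ‖v i‖ = 1 := fun i h1 h2 => bloch_norm _ (hd i h1 h2)
  have chain : ∀ k, 1 ≤ k → k ≤ n →
      InnerProductGeometry.angle (v 1) (v k) ≤
        ∑ i ∈ Finset.Icc 1 (k-1), InnerProductGeometry.angle (v i) (v (i+1)) := by
    intro k
    induction k with
    | zero => intro h; omega
    | succ m ih =>
      intro h1 h2
      by_cases hm : m = 0
      · subst hm
        have hne : v 1 ≠ 0 := by
          intro h
          have := hvnorm 1 le_rfl (by omega)
          rw [h] at this; simp at this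
        simp [InnerProductGeometry.angle_self hne]
      · have hm1 : 1 ≤ m := by omega
        have htri := angle_triangle_unit (hvnorm 1 le_rfl (by omega))
          (hvnorm m hm1 (by omega)) (hvnorm (m+1) (by omega) h2)
        have hih := ih hm1 (by omega)
        have e : m - 1 + 1 = m := Nat.succ_pred_eq_of_pos hm1
        have hsum : ∑ i ∈ Finset.Icc 1 m, InnerProductGeometry.angle (v i) (v (i+1))
            = (∑ i ∈ Finset.Icc 1 (m-1), InnerProductGeometry.angle (v i) (v (i+1)))
              + InnerProductGeometry.angle (v m) (v (m+1)) := by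
          conv_lhs => rw [← e]
          rw [Finset.sum_Icc_succ_top (by omega)]
          rw [e]
        have e2 : m + 1 - 1 = m := by omega
        rw [e2, hsum]
        linarith
  set ψ := InnerProductGeometry.angle (v 1) (v n) with hψ
  set X : ℕ → ℝ := fun i => if i = n then π - ψ else InnerProductGeometry.angle (v i) (v (i+1))
    with hX
  have hcard : (Finset.Icc 1 n).card = n := by
    rw [Nat.card_Icc]; omega
  have hXsplit : ∑ i ∈ Finset.Icc 1 n, Real.cos (X i)
      = (∑ i ∈ Finset.Icc 1 (n-1), Real.cos (InnerProductGeometry.angle (v i) (v (i+1))))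
        + Real.cos (π - ψ) := by
    have e : n - 1 + 1 = n := by omega
    conv_lhs => rw [← e]
    rw [Finset.sum_Icc_succ_top (by omega), e]
    congr 1
    · apply Finset.sum_congr rfl
      intro i hi
      have : i ≠ n := by
        have := Finset.mem_Icc.mp hi; omega
      simp [hX, this]
    · simp [hX]
  have hXsum : π ≤ ∑ i ∈ Finset.Icc 1 n, X i := by
    have e : n - 1 + 1 = n := by omega
    have hsplit : ∑ i ∈ Finset.Icc 1 n, X i
        = (∑ i ∈ Finset.Icc 1 (n-1), InnerProductGeometry.angle (v i) (v (i+1))) + (π - ψ) := by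
      conv_lhs => rw [← e]
      rw [Finset.sum_Icc_succ_top (by omega), e]
      congr 1
      · apply Finset.sum_congr rfl
        intro i hi
        have : i ≠ n := by
          have := Finset.mem_Icc.mp hi; omega
        simp [hX, this]
      · simp [hX]
    rw [hsplit]
    have := chain n (by omega) le_rfl
    rw [← hψ] at this
    linarith
  have hmain := sum_cos_le (t := Finset.Icc 1 n) (x := X)
    (by rw [hcard]; omega)
    (by
      intro i hi
      by_cases h : i = n
      · simp [hX, h]
        exact InnerProductGeometry.angle_le_pi _ _
      · simp [hX, h]
        exact InnerProductGeometry.angle_nonneg _ _)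
    (by
      intro i hi
      by_cases h : i = n
      · simp [hX, h]
        linarith [InnerProductGeometry.angle_nonneg (v 1) (v n), pi_pos]
      · simp [hX, h]
        exact InnerProductGeometry.angle_le_pi _ _)
    hXsum
  rw [hcard, hXsplit] at hmain
  -- turn cosines of angles into inner products
  have hcos_inner : ∀ i, 1 ≤ i → i ≤ n - 1 →
      Real.cos (InnerProductGeometry.angle (v i) (v (i+1))) = ⟪v i, v (i+1)⟫_ℝ := by
    intro i hi1 hi2
    rw [InnerProductGeometry.cos_angle, hvnorm i hi1 (by omega), hvnorm (i+1) (by omega) (by omega)]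
    simp
  have hcosψ : Real.cos ψ = ⟪v 1, v n⟫_ℝ := by
    rw [hψ, InnerProductGeometry.cos_angle, hvnorm 1 le_rfl (by omega), hvnorm n (by omega) le_rfl]
    simp
  rw [Real.cos_pi_sub, hcosψ] at hmain
  have hsum_inner : (∑ i ∈ Finset.Icc 1 (n-1), Real.cos (InnerProductGeometry.angle (v i) (v (i+1))))
      = ∑ i ∈ Finset.Icc 1 (n-1), ⟪v i, v (i+1)⟫_ℝ := by
    apply Finset.sum_congr rfl
    intro i hi
    have := Finset.mem_Icc.mp hi
    exact hcos_inner i this.1 this.2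
  rw [hsum_inner] at hmain
  -- hmain : ∑ ⟪v i, v (i+1)⟫ + -⟪v 1, v n⟫ ≤ n * cos (π / n)
  -- now rewrite the goal using bloch_key
  have hgoal_sum : ∑ i ∈ Finset.Icc 1 (n - 1), ‖⟪d i, d (i + 1)⟫_ℂ‖ ^ 2
      = ∑ i ∈ Finset.Icc 1 (n-1), (1 + ⟪v i, v (i+1)⟫_ℝ) / 2 := by
    apply Finset.sum_congr rfl
    intro i hi
    have hmem := Finset.mem_Icc.mp hi
    exact bloch_key _ _ (hd i hmem.1 (by omega)) (hd (i+1) (by omega) (by omega))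
  have hgoal_e : ‖⟪d 1, d n⟫_ℂ‖ ^ 2 = (1 + ⟪v 1, v n⟫_ℝ) / 2 :=
    bloch_key _ _ (hd 1 le_rfl (by omega)) (hd n (by omega) le_rfl)
  rw [hgoal_sum, hgoal_e]
  have hcard2 : (Finset.Icc 1 (n-1)).card = n - 1 := by
    rw [Nat.card_Icc]; omega
  have hsum_expand : ∑ i ∈ Finset.Icc 1 (n-1), (1 + ⟪v i, v (i+1)⟫_ℝ) / 2
      = ((n:ℝ) - 1 + ∑ i ∈ Finset.Icc 1 (n-1), ⟪v i, v (i+1)⟫_ℝ) / 2 := by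
    rw [← Finset.sum_div, Finset.sum_add_distrib, Finset.sum_const, hcard2, nsmul_eq_mul, mul_one]
    have : ((n - 1 : ℕ) : ℝ) = (n:ℝ) - 1 := by
      push_cast [Nat.cast_sub (by omega : 1 ≤ n)]; ring
    rw [this]
  rw [hsum_expand]
  have hnR : (0:ℝ) < n := by positivity
  have hcos2 : (n:ℝ) * Real.cos (π / n) = 2 * n * Real.cos (π/(2*n))^2 - n := by
    have : π / (n:ℝ) = 2 * (π / (2*n)) := by
      field_simp
    rw [this, Real.cos_two_mul]
    ring
  nlinarith [hmain, hcos2]
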